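/- Let H be a hybrid quantum–classical Hamiltonian on Fin n × Fin m, H = (Matrix.diagonal ε ⊗ₖ 1) + (1 ⊗ₖ H_Q) + ∑ i, (γ i : ℂ) • (Matrix.stdBasisMatrix i i 1 ⊗ₖ S i), and let o : Fin n → ℝ. Then for every z : ℂ, the classical observable Matrix.diagonal o ⊗ₖ 1 commutes with the matrix exponential Matrix.exp ℂ (z • H). -/

import Mathlib

open Matrix Kronecker

lemma stdBasis_eq_diag (n : ℕ) (i : Fin n) :
    Matrix.single i i (1:ℂ) = Matrix.diagonal (Pi.single i 1) := by
  ext a b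
  simp [Matrix.single, Matrix.diagonal, Pi.single_apply]
  aesop

lemma diag_kron_commute (n m : ℕ) (d e : Fin n → ℂ)
    (A : Matrix (Fin m) (Fin m) ℂ) :
    Commute (Matrix.diagonal d ⊗ₖ (1 : Matrix (Fin m) (Fin m) ℂ))
      (Matrix.diagonal e ⊗ₖ A) := by
  unfold Commute SemiconjBy
  rw [← Matrix.mul_kronecker_mul, ← Matrix.mul_kronecker_mul,
    Matrix.diagonal_mul_diagonal, Matrix.diagonal_mul_diagonal, one_mul, mul_one]
  have h : (fun i => d i * e i) = fun i => e i * d i := funext fun i => mul_comm _ _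
  rw [h]

/-- The classical observable commutes with the exponential of (any complex
multiple of) the hybrid Hamiltonian. -/
theorem classical_observable_commutes_with_exp_of_hybrid_hamiltonian
    (n m : ℕ)
    (ε γ : Fin n → ℝ)
    (H_Q : Matrix (Fin m) (Fin m) ℂ)
    (S : Fin n → Matrix (Fin m) (Fin m) ℂ)
    (H : Matrix (Fin n × Fin m) (Fin n × Fin m) ℂ)
    (hH : H = (Matrix.diagonal (fun i => (ε i : ℂ)) ⊗ₖ 1)
        + ((1 : Matrix (Fin n) (Fin n) ℂ) ⊗ₖ H_Q)
        + ∑ i : Fin n, (γ i : ℂ) • (Matrix.single i i 1 ⊗ₖ S i))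
    (o : Fin n → ℝ) (z : ℂ) :
    Commute (Matrix.diagonal (fun i => (o i : ℂ)) ⊗ₖ (1 : Matrix (Fin m) (Fin m) ℂ))
      (NormedSpace.exp (z • H)) := by
  have hc : Commute (Matrix.diagonal (fun i => (o i : ℂ)) ⊗ₖ (1 : Matrix (Fin m) (Fin m) ℂ)) H := by
    rw [hH]
    refine (Commute.add_right (Commute.add_right ?_ ?_) ?_)
    · exact diag_kron_commute n m _ _ 1
    · have := diag_kron_commute n m (fun i => (o i : ℂ)) (fun _ => 1) H_Q
      simpa [Matrix.diagonal_one] using this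
    · refine Commute.sum_right _ _ _ (fun i _ => ?_)
      refine Commute.smul_right ?_ _
      rw [stdBasis_eq_diag]
      exact diag_kron_commute n m _ _ (S i)
  exact (hc.smul_right z).exp_right
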